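/- Suppose R_M ⫫ (M, R_Y) | (X, A, Y) and R_Y ⫫ (Y, R_M) | (X, A, M) (Model S4). Then for all (x, a) with appropriate positivity conditions: P(R_M = 0, R_Y = 0 | X = x, A = a) / P(R_M = 1, R_Y = 1 | X = x, A = a) = E[ odds(R_M = 0 | X, A, M, Y, R_Y = 1) · odds(R_Y = 0 | X, A, M, Y, R_M = 1) | X = x, A = a, R_M = 1, R_Y = 1 ]. -/

import Mathlib

open scoped Classical

noncomputable def Pr {Ω : Type*} [Fintype Ω] (p : Ω → ℝ) (E : Ω → Prop) : ℝ :=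
  ∑ ω, if E ω then p ω else 0

noncomputable def cPr {Ω : Type*} [Fintype Ω] (p : Ω → ℝ) (E F : Ω → Prop) : ℝ :=
  Pr p (fun ω => E ω ∧ F ω) / Pr p F

noncomputable def odds {Ω : Type*} [Fintype Ω] (p : Ω → ℝ) (E F : Ω → Prop) : ℝ :=
  cPr p E F / cPr p (fun ω => ¬ E ω) F

section Aux
variable {Ω : Type*} [Fintype Ω]

lemma Pr_congr (p : Ω → ℝ) {E F : Ω → Prop} (h : ∀ ω, E ω ↔ F ω) : Pr p E = Pr p F :=
  Finset.sum_congr rfl fun ω _ => by simp [h ω]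

lemma Pr_nonneg {p : Ω → ℝ} (hp : ∀ ω, 0 ≤ p ω) (E : Ω → Prop) : 0 ≤ Pr p E :=
  Finset.sum_nonneg fun ω _ => by by_cases h : E ω <;> simp [h, hp ω]

lemma Pr_mono {p : Ω → ℝ} (hp : ∀ ω, 0 ≤ p ω) {E F : Ω → Prop} (h : ∀ ω, E ω → F ω) :
    Pr p E ≤ Pr p F := by
  refine Finset.sum_le_sum fun ω _ => ?_
  by_cases hE : E ω <;> simp [hE, h ω, hp ω]
  · split <;> simp [hp ω]

lemma Pr_split (p : Ω → ℝ) (E : Ω → Prop) (B : Ω → ℕ) (hB : ∀ ω, B ω = 0 ∨ B ω = 1) :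
    Pr p E = Pr p (fun ω => E ω ∧ B ω = 0) + Pr p (fun ω => E ω ∧ B ω = 1) := by
  unfold Pr
  rw [← Finset.sum_add_distrib]
  refine Finset.sum_congr rfl fun ω _ => ?_
  rcases hB ω with h | h <;> by_cases hE : E ω <;> simp [h, hE]

lemma Pr_partition {ℳ 𝒴 : Type*} [Fintype ℳ] [Fintype 𝒴] (p : Ω → ℝ) (E : Ω → Prop)
    (M : Ω → ℳ) (Y : Ω → 𝒴) :
    Pr p E = ∑ m, ∑ y, Pr p (fun ω => E ω ∧ M ω = m ∧ Y ω = y) := by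
  have key : ∀ ω : Ω, (if E ω then p ω else 0)
      = ∑ m, ∑ y, (if E ω ∧ M ω = m ∧ Y ω = y then p ω else 0) := by
    intro ω; by_cases hE : E ω <;> simp [hE, ite_and, Finset.sum_ite_eq']
  unfold Pr
  rw [Finset.sum_congr rfl fun ω _ => key ω, Finset.sum_comm]
  refine Finset.sum_congr rfl fun m _ => ?_
  rw [Finset.sum_comm]
  refine Finset.sum_congr rfl fun y _ => Finset.sum_congr rfl fun ω _ => ?_
  congr

lemma div_div_div_same {a b c : ℝ} (hc : c ≠ 0) : (a / c) / (b / c) = a / b := by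
  rcases eq_or_ne b 0 with hb | hb
  · simp [hb]
  · field_simp

end Aux

/-- Testable implication (T3) of Model S4. -/
theorem S4_testable_implication
    {Ω 𝒳 𝒜 ℳ 𝒴 : Type*} [Fintype Ω] [Fintype ℳ] [Fintype 𝒴]
    (p : Ω → ℝ) (hp : ∀ ω, 0 ≤ p ω) (hsum : ∑ ω, p ω = 1)
    (X : Ω → 𝒳) (A : Ω → 𝒜) (M : Ω → ℳ) (Y : Ω → 𝒴) (RM RY : Ω → ℕ)
    (hRM : ∀ ω, RM ω = 0 ∨ RM ω = 1) (hRY : ∀ ω, RY ω = 0 ∨ RY ω = 1)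
    -- R_M ⫫ (M, R_Y) ∣ (X, A, Y)
    (h1 : ∀ (rm : ℕ) (m : ℳ) (ry : ℕ) (x : 𝒳) (a : 𝒜) (y : 𝒴),
      0 < Pr p (fun ω => M ω = m ∧ RY ω = ry ∧ X ω = x ∧ A ω = a ∧ Y ω = y) →
      cPr p (fun ω => RM ω = rm)
          (fun ω => M ω = m ∧ RY ω = ry ∧ X ω = x ∧ A ω = a ∧ Y ω = y)
        = cPr p (fun ω => RM ω = rm) (fun ω => X ω = x ∧ A ω = a ∧ Y ω = y))
    -- R_Y ⫫ (Y, R_M) ∣ (X, A, M)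
    (h2 : ∀ (ry : ℕ) (y : 𝒴) (rm : ℕ) (x : 𝒳) (a : 𝒜) (m : ℳ),
      0 < Pr p (fun ω => Y ω = y ∧ RM ω = rm ∧ X ω = x ∧ A ω = a ∧ M ω = m) →
      cPr p (fun ω => RY ω = ry)
          (fun ω => Y ω = y ∧ RM ω = rm ∧ X ω = x ∧ A ω = a ∧ M ω = m)
        = cPr p (fun ω => RY ω = ry) (fun ω => X ω = x ∧ A ω = a ∧ M ω = m)) :
    ∀ (x : 𝒳) (a : 𝒜),
      (∀ (m : ℳ) (y : 𝒴) (r s : Fin 2),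
        0 < Pr p (fun ω => RM ω = (r : ℕ) ∧ RY ω = (s : ℕ) ∧
            X ω = x ∧ A ω = a ∧ M ω = m ∧ Y ω = y)) →
      cPr p (fun ω => RM ω = 0 ∧ RY ω = 0) (fun ω => X ω = x ∧ A ω = a)
          / cPr p (fun ω => RM ω = 1 ∧ RY ω = 1) (fun ω => X ω = x ∧ A ω = a)
        = ∑ m : ℳ, ∑ y : 𝒴,
            (odds p (fun ω => RM ω = 0)
                (fun ω => X ω = x ∧ A ω = a ∧ M ω = m ∧ Y ω = y ∧ RY ω = 1)
              * odds p (fun ω => RY ω = 0)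
                  (fun ω => X ω = x ∧ A ω = a ∧ M ω = m ∧ Y ω = y ∧ RM ω = 1))
            * cPr p (fun ω => M ω = m ∧ Y ω = y)
                (fun ω => X ω = x ∧ A ω = a ∧ RM ω = 1 ∧ RY ω = 1) := by
  intro x a hpos
  rcases isEmpty_or_nonempty Ω with hΩ | hΩ
  · simp [Pr, cPr, odds, Finset.univ_eq_empty]
  have hM : Nonempty ℳ := ⟨M hΩ.some⟩
  have hY : Nonempty 𝒴 := ⟨Y hΩ.some⟩
  -- the basic cell probabilities
  set q : ℕ → ℕ → ℳ → 𝒴 → ℝ := fun r s m y =>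
    Pr p (fun ω => X ω = x ∧ A ω = a ∧ M ω = m ∧ Y ω = y ∧ RM ω = r ∧ RY ω = s) with hqdef
  have hqFin : ∀ (u v : Fin 2) m y, 0 < q (u : ℕ) (v : ℕ) m y := by
    intro u v m y
    have h := hpos m y u v
    have e := Pr_congr (p := p)
      (E := fun ω => RM ω = (u : ℕ) ∧ RY ω = (v : ℕ) ∧ X ω = x ∧ A ω = a ∧ M ω = m ∧ Y ω = y)
      (F := fun ω => X ω = x ∧ A ω = a ∧ M ω = m ∧ Y ω = y ∧ RM ω = (u : ℕ) ∧ RY ω = (v : ℕ))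
      (fun ω => by tauto)
    rw [e] at h
    exact h
  have hq00 : ∀ m y, 0 < q 0 0 m y := fun m y => by simpa using hqFin 0 0 m y
  have hq01 : ∀ m y, 0 < q 0 1 m y := fun m y => by simpa using hqFin 0 1 m y
  have hq10 : ∀ m y, 0 < q 1 0 m y := fun m y => by simpa using hqFin 1 0 m y
  have hq11 : ∀ m y, 0 < q 1 1 m y := fun m y => by simpa using hqFin 1 1 m y
  -- the key cross-product identity
  have cross : ∀ m y, q 0 0 m y * q 1 1 m y = q 0 1 m y * q 1 0 m y := by
    intro m y
    have hCset : ∀ ry : ℕ,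
        Pr p (fun ω => M ω = m ∧ RY ω = ry ∧ X ω = x ∧ A ω = a ∧ Y ω = y)
          = q 0 ry m y + q 1 ry m y := by
      intro ry
      rw [Pr_split p _ RM hRM]
      congr 1
      · exact Pr_congr p (fun ω => by tauto)
      · exact Pr_congr p (fun ω => by tauto)
    have hnum : ∀ ry : ℕ,
        Pr p (fun ω => RM ω = 0 ∧ M ω = m ∧ RY ω = ry ∧ X ω = x ∧ A ω = a ∧ Y ω = y)
          = q 0 ry m y := fun ry => Pr_congr p (fun ω => by tauto)
    have hden0 : (0:ℝ) < q 0 0 m y + q 1 0 m y := add_pos (hq00 m y) (hq10 m y)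
    have hden1 : (0:ℝ) < q 0 1 m y + q 1 1 m y := add_pos (hq01 m y) (hq11 m y)
    have e0 := h1 0 m 0 x a y (by rw [hCset 0]; exact hden0)
    have e1 := h1 0 m 1 x a y (by rw [hCset 1]; exact hden1)
    have e : cPr p (fun ω => RM ω = 0)
          (fun ω => M ω = m ∧ RY ω = 0 ∧ X ω = x ∧ A ω = a ∧ Y ω = y)
        = cPr p (fun ω => RM ω = 0)
          (fun ω => M ω = m ∧ RY ω = 1 ∧ X ω = x ∧ A ω = a ∧ Y ω = y) := e0.trans e1.symm
    simp only [cPr] at e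
    rw [hnum 0, hnum 1, hCset 0, hCset 1] at e
    have e' := (div_eq_div_iff hden0.ne' hden1.ne').mp e
    linear_combination e'
  -- denominators
  have hS11pos : 0 < ∑ m, ∑ y, q 1 1 m y :=
    Finset.sum_pos (fun m _ => Finset.sum_pos (fun y _ => hq11 m y) Finset.univ_nonempty)
      Finset.univ_nonempty
  have hPXApos : 0 < Pr p (fun ω => X ω = x ∧ A ω = a) := by
    obtain ⟨m0⟩ := hM
    obtain ⟨y0⟩ := hY
    exact lt_of_lt_of_le (hq00 m0 y0) (Pr_mono hp (fun ω h => ⟨h.1, h.2.1⟩))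
  -- LHS
  have hE00 : Pr p (fun ω => (RM ω = 0 ∧ RY ω = 0) ∧ X ω = x ∧ A ω = a)
      = ∑ m, ∑ y, q 0 0 m y := by
    rw [Pr_partition p _ M Y]
    exact Finset.sum_congr rfl fun m _ => Finset.sum_congr rfl fun y _ =>
      Pr_congr p (fun ω => by tauto)
  have hE11 : Pr p (fun ω => (RM ω = 1 ∧ RY ω = 1) ∧ X ω = x ∧ A ω = a)
      = ∑ m, ∑ y, q 1 1 m y := by
    rw [Pr_partition p _ M Y]
    exact Finset.sum_congr rfl fun m _ => Finset.sum_congr rfl fun y _ =>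
      Pr_congr p (fun ω => by tauto)
  have hLHS : cPr p (fun ω => RM ω = 0 ∧ RY ω = 0) (fun ω => X ω = x ∧ A ω = a)
      / cPr p (fun ω => RM ω = 1 ∧ RY ω = 1) (fun ω => X ω = x ∧ A ω = a)
      = (∑ m, ∑ y, q 0 0 m y) / (∑ m, ∑ y, q 1 1 m y) := by
    simp only [cPr]
    rw [hE00, hE11]
    exact div_div_div_same hPXApos.ne'
  -- RHS term computation
  have hG : Pr p (fun ω => X ω = x ∧ A ω = a ∧ RM ω = 1 ∧ RY ω = 1)
      = ∑ m, ∑ y, q 1 1 m y := by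
    rw [Pr_partition p _ M Y]
    exact Finset.sum_congr rfl fun m _ => Finset.sum_congr rfl fun y _ =>
      Pr_congr p (fun ω => by tauto)
  have hterm : ∀ m y,
      (odds p (fun ω => RM ω = 0)
          (fun ω => X ω = x ∧ A ω = a ∧ M ω = m ∧ Y ω = y ∧ RY ω = 1)
        * odds p (fun ω => RY ω = 0)
            (fun ω => X ω = x ∧ A ω = a ∧ M ω = m ∧ Y ω = y ∧ RM ω = 1))
      * cPr p (fun ω => M ω = m ∧ Y ω = y)
          (fun ω => X ω = x ∧ A ω = a ∧ RM ω = 1 ∧ RY ω = 1)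
      = q 0 0 m y / (∑ m, ∑ y, q 1 1 m y) := by
    intro m y
    have hF1 : Pr p (fun ω => X ω = x ∧ A ω = a ∧ M ω = m ∧ Y ω = y ∧ RY ω = 1)
        = q 0 1 m y + q 1 1 m y := by
      rw [Pr_split p _ RM hRM]
      congr 1
      · exact Pr_congr p (fun ω => by tauto)
      · exact Pr_congr p (fun ω => by tauto)
    have hF1n0 : Pr p (fun ω => RM ω = 0 ∧ X ω = x ∧ A ω = a ∧ M ω = m ∧ Y ω = y ∧ RY ω = 1)
        = q 0 1 m y := Pr_congr p (fun ω => by tauto)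
    have hF1n1 : Pr p (fun ω => ¬ RM ω = 0 ∧ X ω = x ∧ A ω = a ∧ M ω = m ∧ Y ω = y ∧ RY ω = 1)
        = q 1 1 m y := Pr_congr p (fun ω => by rcases hRM ω with h | h <;> simp [h] <;> tauto)
    have hodds1 : odds p (fun ω => RM ω = 0)
        (fun ω => X ω = x ∧ A ω = a ∧ M ω = m ∧ Y ω = y ∧ RY ω = 1)
        = q 0 1 m y / q 1 1 m y := by
      simp only [odds, cPr]
      rw [hF1n0, hF1n1, hF1]
      exact div_div_div_same (add_pos (hq01 m y) (hq11 m y)).ne'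
    have hF2 : Pr p (fun ω => X ω = x ∧ A ω = a ∧ M ω = m ∧ Y ω = y ∧ RM ω = 1)
        = q 1 0 m y + q 1 1 m y := by
      rw [Pr_split p _ RY hRY]
      congr 1
      · exact Pr_congr p (fun ω => by tauto)
      · exact Pr_congr p (fun ω => by tauto)
    have hF2n0 : Pr p (fun ω => RY ω = 0 ∧ X ω = x ∧ A ω = a ∧ M ω = m ∧ Y ω = y ∧ RM ω = 1)
        = q 1 0 m y := Pr_congr p (fun ω => by tauto)
    have hF2n1 : Pr p (fun ω => ¬ RY ω = 0 ∧ X ω = x ∧ A ω = a ∧ M ω = m ∧ Y ω = y ∧ RM ω = 1)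
        = q 1 1 m y := Pr_congr p (fun ω => by rcases hRY ω with h | h <;> simp [h] <;> tauto)
    have hodds2 : odds p (fun ω => RY ω = 0)
        (fun ω => X ω = x ∧ A ω = a ∧ M ω = m ∧ Y ω = y ∧ RM ω = 1)
        = q 1 0 m y / q 1 1 m y := by
      simp only [odds, cPr]
      rw [hF2n0, hF2n1, hF2]
      exact div_div_div_same (add_pos (hq10 m y) (hq11 m y)).ne'
    have hGn : Pr p (fun ω => (M ω = m ∧ Y ω = y) ∧ X ω = x ∧ A ω = a ∧ RM ω = 1 ∧ RY ω = 1)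
        = q 1 1 m y := Pr_congr p (fun ω => by tauto)
    have hcp : cPr p (fun ω => M ω = m ∧ Y ω = y)
        (fun ω => X ω = x ∧ A ω = a ∧ RM ω = 1 ∧ RY ω = 1)
        = q 1 1 m y / (∑ m, ∑ y, q 1 1 m y) := by
      simp only [cPr]
      rw [hGn, hG]
    rw [hodds1, hodds2, hcp]
    have h11 : q 1 1 m y ≠ 0 := (hq11 m y).ne'
    have hS : (∑ m, ∑ y, q 1 1 m y) ≠ 0 := hS11pos.ne'
    field_simp
    linear_combination (-1 : ℝ) * (cross m y)
  rw [hLHS, Finset.sum_congr rfl fun m _ => Finset.sum_congr rfl fun y _ => hterm m y]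
  simp only [← Finset.sum_div]
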